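/- Let a ∈ ℂ with Re(a) > 0, let ν < 0, let k ≥ 1 be an integer with (1 − 2k)/2 < ν, and let C > 0. Let g : ℂ → ℂ be any function satisfying |g(z)| ≤ C (1 − |z|²)^{−(1+2k−2ν)/2} for all z with |z| < 1. Then, writing w_n = na/(na+2) (which lies in the open unit disk for every positive integer n) and t_n = 4/|na+2|², one has |g(w_n)| · t_n^k → 0 as n → ∞. -/

import Mathlib

open Filter Topology

set_option maxHeartbeats 1000000

/-- The key estimate for parabolic non-automorphisms: if `Re a > 0`,
`(1-2k)/2 < ν < 0`, `k ≥ 1`, and `g` satisfies the growth bound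
`|g(z)| ≤ C (1-|z|²)^{-(1+2k-2ν)/2}` on the open unit disk, then with
`w_n = na/(na+2)` (which lies in the open unit disk for each `n ≥ 1`) and
`t_n = 4/|na+2|²` one has `|g(w_n)| t_n^k → 0` as `n → ∞`. -/
theorem parabolic_key_estimate
    (a : ℂ) (ha : 0 < a.re) (ν : ℝ) (hν : ν < 0)
    (k : ℕ) (hk : 1 ≤ k) (hνk : (1 - 2 * (k : ℝ)) / 2 < ν)
    (C : ℝ) (hC : 0 < C) (g : ℂ → ℂ)
    (hg : ∀ z : ℂ, ‖z‖ < 1 →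
      ‖g z‖ ≤ C * (1 - ‖z‖ ^ 2) ^ (-((1 + 2 * (k : ℝ) - 2 * ν) / 2))) :
    (∀ n : ℕ, 1 ≤ n → ‖(n : ℂ) * a / ((n : ℂ) * a + 2)‖ < 1) ∧
    Tendsto
      (fun n : ℕ =>
        ‖g ((n : ℂ) * a / ((n : ℂ) * a + 2))‖ * (4 / ‖(n : ℂ) * a + 2‖ ^ 2) ^ k)
      atTop (𝓝 0) := by
  set α : ℝ := (1 + 2 * (k : ℝ) - 2 * ν) / 2 with hαdef
  have hα : 0 < α := by
    have : (1 : ℝ) ≤ (k : ℝ) := by exact_mod_cast hk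
    have : (0 : ℝ) < 1 + 2 * (k : ℝ) := by linarith
    simp only [hαdef]
    linarith
  -- norm-square identity
  have hnormsq : ∀ z : ℂ, ‖z‖ ^ 2 = z.re ^ 2 + z.im ^ 2 := by
    intro z
    rw [Complex.sq_norm, Complex.normSq_apply]
    ring
  have hsq : ∀ n : ℕ, ‖(n : ℂ) * a + 2‖ ^ 2
      = ‖(n : ℂ) * a‖ ^ 2 + (4 * (n : ℝ) * a.re + 4) := by
    intro n
    rw [hnormsq, hnormsq]
    simp [Complex.add_re, Complex.add_im, Complex.mul_re, Complex.mul_im]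
    ring
  have hpos : ∀ n : ℕ, 0 < 4 * (n : ℝ) * a.re + 4 := by
    intro n
    have h1 : (0 : ℝ) ≤ (n : ℝ) := Nat.cast_nonneg n
    nlinarith
  have hDpos : ∀ n : ℕ, 0 < ‖(n : ℂ) * a + 2‖ ^ 2 := by
    intro n
    rw [hsq n]
    have := sq_nonneg ‖(n : ℂ) * a‖
    nlinarith [hpos n]
  have hlt : ∀ n : ℕ, ‖(n : ℂ) * a / ((n : ℂ) * a + 2)‖ < 1 := by
    intro n
    have hne : ((n : ℂ) * a + 2) ≠ 0 := by
      intro h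
      have := hDpos n
      rw [h] at this
      simp at this
    have hpos' : 0 < ‖(n : ℂ) * a + 2‖ := norm_pos_iff.mpr hne
    rw [norm_div]
    rw [div_lt_one hpos']
    have h1 : ‖(n : ℂ) * a‖ ^ 2 < ‖(n : ℂ) * a + 2‖ ^ 2 := by
      rw [hsq n]; nlinarith [hpos n]
    nlinarith [norm_nonneg ((n : ℂ) * a), norm_nonneg ((n : ℂ) * a + 2)]
  refine ⟨fun n _ => hlt n, ?_⟩
  -- the quantity 1 - |w|^2
  have hone : ∀ n : ℕ, 1 - ‖(n : ℂ) * a / ((n : ℂ) * a + 2)‖ ^ 2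
      = (4 * (n : ℝ) * a.re + 4) / ‖(n : ℂ) * a + 2‖ ^ 2 := by
    intro n
    have hw : ‖(n : ℂ) * a / ((n : ℂ) * a + 2)‖ ^ 2
        = ‖(n : ℂ) * a‖ ^ 2 / ‖(n : ℂ) * a + 2‖ ^ 2 := by
      rw [norm_div, div_pow]
    rw [hw, one_sub_div (hDpos n).ne', hsq n]
    congr 1
    ring
  set β : ℝ := 1 - 2 * ν - α with hβdef
  have hβ : β < 0 := by
    simp only [hβdef, hαdef]
    linarith
  set K : ℝ := C * 4 ^ k * (4 * a.re) ^ (-α) * (‖a‖ + 2) ^ (1 - 2 * ν) with hKdef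
  have hK : 0 < K := by
    have h1 : (0 : ℝ) < 4 * a.re := by linarith
    have h2 : (0 : ℝ) < ‖a‖ + 2 := by positivity
    positivity
  -- eventual bound
  have hbound : ∀ n : ℕ, 1 ≤ n →
      ‖g ((n : ℂ) * a / ((n : ℂ) * a + 2))‖ * (4 / ‖(n : ℂ) * a + 2‖ ^ 2) ^ k
        ≤ K * (n : ℝ) ^ β := by
    intro n hn
    have hn0 : (0 : ℝ) < (n : ℝ) := by exact_mod_cast hn
    set D : ℝ := ‖(n : ℂ) * a + 2‖ ^ 2 with hD
    have hD0 : 0 < D := hDpos n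
    have hx0 : 0 < 4 * (n : ℝ) * a.re + 4 := hpos n
    have hgb := hg _ (hlt n)
    rw [hone n] at hgb
    have htk : (0 : ℝ) ≤ (4 / D) ^ k := by positivity
    have step1 : ‖g ((n : ℂ) * a / ((n : ℂ) * a + 2))‖ * (4 / D) ^ k
        ≤ C * ((4 * (n : ℝ) * a.re + 4) / D) ^ (-α) * (4 / D) ^ k :=
      mul_le_mul_of_nonneg_right hgb htk
    refine step1.trans ?_
    -- rewrite the middle term
    have hmid : ((4 * (n : ℝ) * a.re + 4) / D) ^ (-α)
        = (4 * (n : ℝ) * a.re + 4) ^ (-α) * D ^ α := by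
      rw [Real.div_rpow hx0.le hD0.le, Real.rpow_neg hD0.le]
      field_simp
    have htk2 : (4 / D) ^ k = 4 ^ k * (D ^ (k : ℝ))⁻¹ := by
      rw [div_pow, Real.rpow_natCast]
      ring
    rw [hmid, htk2]
    have hDk : D ^ (α - (k : ℝ)) = D ^ α * (D ^ (k : ℝ))⁻¹ := by
      rw [Real.rpow_sub hD0, div_eq_mul_inv]
    have hrw : C * ((4 * (n : ℝ) * a.re + 4) ^ (-α) * D ^ α) * ((4:ℝ) ^ k * (D ^ (k : ℝ))⁻¹)
        = C * 4 ^ k * ((4 * (n : ℝ) * a.re + 4) ^ (-α) * D ^ (α - (k : ℝ))) := by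
      rw [hDk]; ring
    rw [hrw]
    -- now estimate the two rpow factors
    have hαk : 0 < α - (k : ℝ) := by
      simp only [hαdef]
      linarith
    have hest1 : (4 * (n : ℝ) * a.re + 4) ^ (-α)
        ≤ (4 * a.re) ^ (-α) * (n : ℝ) ^ (-α) := by
      have h4 : (0 : ℝ) < 4 * a.re * (n : ℝ) := by positivity
      have hle : 4 * a.re * (n : ℝ) ≤ 4 * (n : ℝ) * a.re + 4 := by nlinarith
      calc (4 * (n : ℝ) * a.re + 4) ^ (-α) ≤ (4 * a.re * (n : ℝ)) ^ (-α) :=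
            Real.rpow_le_rpow_of_nonpos h4 hle (neg_nonpos.mpr hα.le)
        _ = (4 * a.re) ^ (-α) * (n : ℝ) ^ (-α) :=
            Real.mul_rpow (by positivity) hn0.le
    have hest2 : D ^ (α - (k : ℝ))
        ≤ ((‖a‖ + 2) ^ (1 - 2*ν)) * (n : ℝ) ^ (1 - 2*ν) := by
      have hDle : D ≤ ((n : ℝ) * (‖a‖ + 2)) ^ 2 := by
        have h1 : ‖(n : ℂ) * a + 2‖ ≤ (n : ℝ) * ‖a‖ + 2 := by
          calc ‖(n : ℂ) * a + 2‖ ≤ ‖(n : ℂ) * a‖ + ‖(2 : ℂ)‖ := norm_add_le _ _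
            _ = (n : ℝ) * ‖a‖ + 2 := by
                rw [norm_mul, Complex.norm_natCast, Complex.norm_ofNat]
        have h2 : (n : ℝ) * ‖a‖ + 2 ≤ (n : ℝ) * (‖a‖ + 2) := by
          have : (1 : ℝ) ≤ (n : ℝ) := by exact_mod_cast hn
          nlinarith [norm_nonneg a]
        have h3 : ‖(n : ℂ) * a + 2‖ ≤ (n : ℝ) * (‖a‖ + 2) := h1.trans h2
        have := norm_nonneg ((n : ℂ) * a + 2)
        nlinarith
      calc D ^ (α - (k : ℝ)) ≤ (((n : ℝ) * (‖a‖ + 2)) ^ 2) ^ (α - (k : ℝ)) :=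
            Real.rpow_le_rpow hD0.le hDle hαk.le
        _ = ((n : ℝ) * (‖a‖ + 2)) ^ (2 * (α - (k : ℝ))) := by
            rw [← Real.rpow_natCast ((n : ℝ) * (‖a‖ + 2)) 2,
              ← Real.rpow_mul (by positivity)]
            norm_num
        _ = ((‖a‖ + 2) ^ (1 - 2*ν)) * (n : ℝ) ^ (1 - 2*ν) := by
            have h2α : 2 * (α - (k : ℝ)) = 1 - 2 * ν := by
              simp only [hαdef]; ring
            rw [h2α, Real.mul_rpow hn0.le (by positivity)]
            ring
    have hnn1 : (0 : ℝ) ≤ (4 * (n : ℝ) * a.re + 4) ^ (-α) := Real.rpow_nonneg hx0.le _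
    have hnn2 : (0 : ℝ) ≤ (4 * a.re) ^ (-α) * (n : ℝ) ^ (-α) := by positivity
    have hnn3 : (0 : ℝ) ≤ D ^ (α - (k : ℝ)) := Real.rpow_nonneg hD0.le _
    have hmul : (4 * (n : ℝ) * a.re + 4) ^ (-α) * D ^ (α - (k : ℝ))
        ≤ ((4 * a.re) ^ (-α) * (n : ℝ) ^ (-α)) * (((‖a‖ + 2) ^ (1 - 2*ν)) * (n : ℝ) ^ (1 - 2*ν)) :=
      mul_le_mul hest1 hest2 hnn3 hnn2
    have hC4 : (0 : ℝ) ≤ C * 4 ^ k := by positivity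
    calc C * 4 ^ k * ((4 * (n : ℝ) * a.re + 4) ^ (-α) * D ^ (α - (k : ℝ)))
        ≤ C * 4 ^ k * (((4 * a.re) ^ (-α) * (n : ℝ) ^ (-α)) *
            (((‖a‖ + 2) ^ (1 - 2*ν)) * (n : ℝ) ^ (1 - 2*ν))) :=
          mul_le_mul_of_nonneg_left hmul hC4
      _ = K * ((n : ℝ) ^ (-α) * (n : ℝ) ^ (1 - 2*ν)) := by
          simp only [hKdef]; ring
      _ = K * (n : ℝ) ^ β := by
          rw [← Real.rpow_add hn0]
          simp only [hβdef]
          ring_nf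
  -- the majorant tends to 0
  have hmaj : Tendsto (fun n : ℕ => K * (n : ℝ) ^ β) atTop (𝓝 0) := by
    have h1 : Tendsto (fun x : ℝ => x ^ (-(-β))) atTop (𝓝 0) :=
      tendsto_rpow_neg_atTop (by linarith)
    have h2 : Tendsto (fun n : ℕ => (n : ℝ) ^ β) atTop (𝓝 0) := by
      simpa [Function.comp_def] using h1.comp tendsto_natCast_atTop_atTop
    have := h2.const_mul K
    simpa using this
  refine squeeze_zero' ?_ ?_ hmaj
  · filter_upwards with n
    positivity
  · filter_upwards [eventually_ge_atTop 1] with n hn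
    exact hbound n hn
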